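/- Let ∇ be a Type B connection on M = (0,∞)×ℝ with Christoffel symbols Γ_{ij}^k = C_{ij}^k/x¹. (i) For any real a ≠ 0, the vector field (x¹)^a ∂₂ is an affine Killing field for ∇ if and only if C₁₂¹ = 0, C₂₂¹ = 0, C₂₂² = 0 and a = 1 + C₁₁¹ − 2C₁₂². (ii) The vector field log(x¹) ∂₂ is an affine Killing field for ∇ if and only if C₁₂¹ = 0, C₂₂¹ = 0, C₂₂² = 0 and 1 + C₁₁¹ − 2C₁₂² = 0. -/

import Mathlib

set_option maxHeartbeats 2000000
noncomputable section

/-- The coordinate directions of ℝ². -/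
def ee : Fin 2 → ℝ × ℝ := ![(1, 0), (0, 1)]

/-- Partial derivative `∂_i f`. -/
def pd (i : Fin 2) (f : ℝ × ℝ → ℝ) : ℝ × ℝ → ℝ :=
  fun p => fderiv ℝ f p (ee i)

/-- Christoffel symbols `Γ_{ij}^k = C_{ij}^k / x¹` of a Type B connection on `(0,∞)×ℝ`. -/
def GammaB (C : Fin 2 → Fin 2 → Fin 2 → ℝ) (i j k : Fin 2) : ℝ × ℝ → ℝ :=
  fun p => C i j k / p.1

/-- Affine Killing vector field for a Type B connection:
`∂_i∂_j X^k + Σ_l (X^l ∂_l Γ_{ij}^k + Γ_{lj}^k ∂_i X^l + Γ_{il}^k ∂_j X^l − Γ_{ij}^l ∂_l X^k) = 0`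
on `M = (0,∞) × ℝ`. -/
def IsKillingB (C : Fin 2 → Fin 2 → Fin 2 → ℝ) (X : Fin 2 → ℝ × ℝ → ℝ) : Prop :=
  ∀ i j k : Fin 2, ∀ p : ℝ × ℝ, 0 < p.1 →
    pd i (pd j (X k)) p
      + ∑ l, (X l p * pd l (GammaB C i j k) p + GammaB C l j k p * pd i (X l) p
          + GammaB C i l k p * pd j (X l) p - GammaB C i j l p * pd l (X k) p) = 0

/-- characterization of when `(x¹)^a ∂₂` (for `a ≠ 0`) and `log(x¹) ∂₂` are
affine Killing fields of a Type B connection. -/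
lemma diff_of_comp {f : ℝ → ℝ} {p : ℝ × ℝ} (h : DifferentiableAt ℝ (fun q : ℝ × ℝ => f q.1) p) :
    DifferentiableAt ℝ f p.1 := by
  have := DifferentiableAt.comp (g := fun q : ℝ × ℝ => f q.1) (f := fun t : ℝ => (t, p.2)) p.1
    (by exact h) (DifferentiableAt.prodMk (𝕜 := ℝ) differentiableAt_id (differentiableAt_const p.2))
  exact this

lemma pd0_comp (f : ℝ → ℝ) : pd 0 (fun q => f q.1) = fun p => deriv f p.1 := by
  funext p
  by_cases h : DifferentiableAt ℝ f p.1
  · have hf : HasFDerivAt (fun q : ℝ × ℝ => f q.1)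
      ((ContinuousLinearMap.smulRight (1 : ℝ →L[ℝ] ℝ) (deriv f p.1)).comp
        (ContinuousLinearMap.fst ℝ ℝ ℝ)) p :=
      (h.hasDerivAt.hasFDerivAt).comp p hasFDerivAt_fst
    simp [pd, hf.fderiv, ee]
  · have h2 : ¬ DifferentiableAt ℝ (fun q : ℝ × ℝ => f q.1) p := fun hc => h (diff_of_comp hc)
    simp [pd, fderiv_zero_of_not_differentiableAt h2, deriv_zero_of_not_differentiableAt h]

lemma pd1_comp (f : ℝ → ℝ) : pd 1 (fun q => f q.1) = fun _ => 0 := by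
  funext p
  by_cases h : DifferentiableAt ℝ f p.1
  · have hf : HasFDerivAt (fun q : ℝ × ℝ => f q.1)
      ((ContinuousLinearMap.smulRight (1 : ℝ →L[ℝ] ℝ) (deriv f p.1)).comp
        (ContinuousLinearMap.fst ℝ ℝ ℝ)) p :=
      (h.hasDerivAt.hasFDerivAt).comp p hasFDerivAt_fst
    simp [pd, hf.fderiv, ee]
  · have h2 : ¬ DifferentiableAt ℝ (fun q : ℝ × ℝ => f q.1) p := fun hc => h (diff_of_comp hc)
    simp [pd, fderiv_zero_of_not_differentiableAt h2]

lemma pd_const (i : Fin 2) (c : ℝ) : pd i (fun _ => c) = fun _ => 0 := by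
  funext p; simp [pd]

lemma GammaB_apply (C : Fin 2 → Fin 2 → Fin 2 → ℝ) (i j k : Fin 2) (p : ℝ × ℝ) :
    GammaB C i j k p = C i j k / p.1 := rfl

lemma pd0_GammaB (C : Fin 2 → Fin 2 → Fin 2 → ℝ) (i j k : Fin 2) (p : ℝ × ℝ) :
    pd 0 (GammaB C i j k) p = C i j k * (-(p.1 ^ 2)⁻¹) := by
  have : GammaB C i j k = fun q : ℝ × ℝ => (fun x : ℝ => C i j k / x) q.1 := rfl
  rw [this, pd0_comp]
  have h2 : HDiv.hDiv (C i j k) = fun x : ℝ => C i j k * x⁻¹ := funext fun x => div_eq_mul_inv _ _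
  show deriv (HDiv.hDiv (C i j k)) p.1 = _
  rw [h2, deriv_const_mul_field]
  simp

lemma pd1_GammaB (C : Fin 2 → Fin 2 → Fin 2 → ℝ) (i j k : Fin 2) (p : ℝ × ℝ) :
    pd 1 (GammaB C i j k) p = 0 := by
  have : GammaB C i j k = fun q : ℝ × ℝ => (fun x : ℝ => C i j k / x) q.1 := rfl
  rw [this, pd1_comp]

lemma isKillingB_iff (C : Fin 2 → Fin 2 → Fin 2 → ℝ) (hC : ∀ i j k, C i j k = C j i k)
    (f : ℝ → ℝ) :
    IsKillingB C ![fun _ => 0, fun p => f p.1] ↔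
    ∀ x : ℝ, 0 < x →
      C 0 1 0 * deriv f x = 0 ∧ C 1 1 0 * deriv f x = 0 ∧
      C 1 1 1 * deriv f x = 0 ∧
      x * deriv (deriv f) x + (2 * C 0 1 1 - C 0 0 0) * deriv f x = 0 := by
  have h100 : C 1 0 0 = C 0 1 0 := hC 1 0 0
  have h101 : C 1 0 1 = C 0 1 1 := hC 1 0 1
  constructor
  · intro h x hx
    have hxne : x ≠ 0 := ne_of_gt hx
    have e000 := h 0 0 0 (x, 0) hx
    have e010 := h 0 1 0 (x, 0) hx
    have e011 := h 0 1 1 (x, 0) hx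
    have e001 := h 0 0 1 (x, 0) hx
    simp only [Fin.sum_univ_two, Matrix.cons_val_zero, Matrix.cons_val_one, Matrix.head_cons,
      pd0_comp, pd1_comp, pd_const, pd0_GammaB, pd1_GammaB, GammaB_apply, deriv_const] at e000 e010 e011 e001
    simp only [mul_zero, zero_mul, add_zero, zero_add, sub_zero, zero_sub, h100, h101] at e000 e010 e011 e001
    refine ⟨?_, ?_, ?_, ?_⟩
    · field_simp [h100] at e000 ⊢
      linarith
    · field_simp at e010 ⊢
      linarith
    · have h1 : C 0 1 0 * deriv f x = 0 := by field_simp [h100] at e000 ⊢; linarith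
      field_simp at e011 ⊢
      nlinarith [e011, h1]
    · field_simp [h101] at e001 ⊢
      nlinarith [e001]
  · intro h i j k p hp
    have hxne : p.1 ≠ 0 := ne_of_gt hp
    obtain ⟨h1, h2, h3, h4⟩ := h p.1 hp
    have hi : i = 0 ∨ i = 1 := by omega
    have hj : j = 0 ∨ j = 1 := by omega
    have hk : k = 0 ∨ k = 1 := by omega
    rcases hi with rfl | rfl <;> rcases hj with rfl | rfl <;> rcases hk with rfl | rfl <;>
      simp only [Fin.sum_univ_two, Matrix.cons_val_zero, Matrix.cons_val_one, Matrix.head_cons,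
        pd0_comp, pd1_comp, pd_const, pd0_GammaB, pd1_GammaB, GammaB_apply, deriv_const,
        Fin.isValue, h100, h101] <;>
      field_simp <;> nlinarith [h1, h2, h3, h4, sq_nonneg p.1]

theorem stmt10 (C : Fin 2 → Fin 2 → Fin 2 → ℝ)
    (hC : ∀ i j k, C i j k = C j i k) :
    (∀ a : ℝ, a ≠ 0 →
      (IsKillingB C ![fun _ => 0, fun p => p.1 ^ a] ↔
        (C 0 1 0 = 0 ∧ C 1 1 0 = 0 ∧ C 1 1 1 = 0 ∧ a = 1 + C 0 0 0 - 2 * C 0 1 1))) ∧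
    (IsKillingB C ![fun _ => 0, fun p => Real.log p.1] ↔
      (C 0 1 0 = 0 ∧ C 1 1 0 = 0 ∧ C 1 1 1 = 0 ∧ 1 + C 0 0 0 - 2 * C 0 1 1 = 0)) := by
  constructor
  · intro a ha
    have hd : ∀ x : ℝ, 0 < x → deriv (fun y : ℝ => y ^ a) x = a * x ^ (a - 1) := fun x hx =>
      (Real.hasDerivAt_rpow_const (Or.inl (ne_of_gt hx))).deriv
    have hd2 : ∀ x : ℝ, 0 < x →
        deriv (deriv (fun y : ℝ => y ^ a)) x = a * ((a - 1) * x ^ (a - 2)) := by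
      intro x hx
      have hev : deriv (fun y : ℝ => y ^ a) =ᶠ[nhds x] fun y => a * y ^ (a - 1) := by
        filter_upwards [eventually_gt_nhds hx] with y hy
        exact (Real.hasDerivAt_rpow_const (Or.inl (ne_of_gt hy))).deriv
      rw [hev.deriv_eq, deriv_const_mul_field,
        (Real.hasDerivAt_rpow_const (Or.inl (ne_of_gt hx))).deriv]
      have h12 : a - 1 - 1 = a - 2 := by ring
      rw [h12]
    refine (isKillingB_iff C hC (fun x : ℝ => x ^ a)).trans ?_
    constructor
    · intro h
      obtain ⟨e1, e2, e3, e4⟩ := h 1 one_pos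
      rw [hd 1 one_pos] at e1 e2 e3 e4
      rw [hd2 1 one_pos] at e4
      simp only [Real.one_rpow, mul_one, one_mul] at e1 e2 e3 e4
      have c1 : C 0 1 0 = 0 := by
        rcases mul_eq_zero.mp e1 with h' | h'
        · exact h'
        · exact absurd h' ha
      have c2 : C 1 1 0 = 0 := by
        rcases mul_eq_zero.mp e2 with h' | h'
        · exact h'
        · exact absurd h' ha
      have c3 : C 1 1 1 = 0 := by
        rcases mul_eq_zero.mp e3 with h' | h'
        · exact h'
        · exact absurd h' ha
      refine ⟨c1, c2, c3, ?_⟩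
      have h5 : a * (a - (1 + C 0 0 0 - 2 * C 0 1 1)) = 0 := by linear_combination e4
      rcases mul_eq_zero.mp h5 with h' | h'
      · exact absurd h' ha
      · linarith
    · rintro ⟨c1, c2, c3, c4⟩ x hx
      rw [hd x hx, hd2 x hx]
      have hx1 : x ^ (a - 1) = x ^ (a - 2) * x := by
        rw [show a - 1 = a - 2 + 1 by ring, Real.rpow_add_one (ne_of_gt hx)]
      exact ⟨by rw [c1]; ring, by rw [c2]; ring, by rw [c3]; ring, by
        linear_combination (x * a * x ^ (a - 2)) * c4 + (a * (2 * C 0 1 1 - C 0 0 0)) * hx1⟩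
  · have hd : deriv Real.log = fun x : ℝ => x⁻¹ := Real.deriv_log'
    refine (isKillingB_iff C hC Real.log).trans ?_
    constructor
    · intro h
      obtain ⟨e1, e2, e3, e4⟩ := h 1 one_pos
      rw [hd] at e1 e2 e3 e4
      simp only [deriv_inv, one_pow, inv_one, mul_one, one_mul] at e1 e2 e3 e4
      exact ⟨e1, e2, e3, by linarith⟩
    · rintro ⟨c1, c2, c3, c4⟩ x hx
      rw [hd]
      simp only [deriv_inv, c1, c2, c3, zero_mul]
      refine ⟨trivial, trivial, trivial, ?_⟩
      have hxne : x ≠ 0 := ne_of_gt hx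
      field_simp
      linear_combination (-1 : ℝ) * c4
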